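/- Proposition 4 (multi-element energy estimate for the merged advection–diffusion scheme): let P = P^L ⊕ₘ P^R, Q = Q^L ⊕ₘ Q^R and K = K^L ⊕ₘ K^R be the merged (2p+1)×(2p+1) matrices (so P is symmetric positive definite, Q + Qᵀ = B⁽²ᵖ⁾ and K is positive semidefinite), set N = 2p and Dₓ = P⁻¹Q. If U : ℝ → ℝ^{N+1} is continuously differentiable and satisfies, for all t ≥ 0, P U′(t) + a Q U(t) = E B⁽ᴺ⁾ Dₓ U(t) − K U(t) + SAT(t), where SAT(t) = −e₀·(a·U₀(t) − ε₀·(Dₓ U(t))₀) + e_N·(−ε_N·(Dₓ U(t))_N), then for every t ≥ 0, U(t)ᵀ P U(t) + 2 ∫₀ᵗ U(s)ᵀ K U(s) ds ≤ U(0)ᵀ P U(0). -/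

import Mathlib

open Matrix

/-- The boundary matrix `B⁽ⁿ⁾`: `(0,0)` entry `−1`, `(n,n)` entry `1`, all other entries `0`. -/
def Bmat (n : ℕ) : Matrix (Fin (n+1)) (Fin (n+1)) ℝ :=
  Matrix.of fun i j =>
    if i = j ∧ i = Fin.last n then 1 else if i = j ∧ i = 0 then -1 else 0

/-- The merged `(2p+1)×(2p+1)` matrix `A = Aᴸ ⊕ₘ Aᴿ` built from two `(p+1)×(p+1)` element
matrices sharing the interface node `p`. -/
def merge {p : ℕ} (AL AR : Matrix (Fin (p+1)) (Fin (p+1)) ℝ) :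
    Matrix (Fin (2*p+1)) (Fin (2*p+1)) ℝ :=
  Matrix.of fun i j =>
    (if h : (i : ℕ) ≤ p ∧ (j : ℕ) ≤ p then
        AL ⟨i, by omega⟩ ⟨j, by omega⟩ else 0)
    + (if h : p ≤ (i : ℕ) ∧ p ≤ (j : ℕ) then
        AR ⟨(i : ℕ) - p, by have := i.isLt; omega⟩ ⟨(j : ℕ) - p, by have := j.isLt; omega⟩
      else 0)

lemma merge_transpose {p : ℕ} (A B : Matrix (Fin (p+1)) (Fin (p+1)) ℝ) :
    (merge A B)ᵀ = merge Aᵀ Bᵀ := by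
  ext i j
  simp only [merge, transpose_apply, of_apply]
  split_ifs <;> (first | rfl | (exfalso; tauto))

lemma merge_add {p : ℕ} (A B C D : Matrix (Fin (p+1)) (Fin (p+1)) ℝ) :
    merge A B + merge C D = merge (A + C) (B + D) := by
  ext i j
  simp only [merge, Matrix.add_apply, of_apply]
  split_ifs <;> (first | ring | (exfalso; tauto))

lemma merge_Bmat {p : ℕ} (hp : 1 ≤ p) : merge (Bmat p) (Bmat p) = Bmat (2*p) := by
  ext i j
  have hi := i.isLt
  have hj := j.isLt
  simp only [merge, Bmat, of_apply, Fin.ext_iff, Fin.val_last, Fin.val_zero]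
  split_ifs
  all_goals try norm_num
  all_goals exfalso
  all_goals omega

lemma sum_restrict {n m : ℕ} (f : Fin m → Fin n) (hf : Function.Injective f)
    (g : Fin n → ℝ) (h : ∀ i, (∀ j, f j ≠ i) → g i = 0) :
    ∑ i, g i = ∑ j, g (f j) := by
  classical
  calc ∑ i, g i = ∑ i ∈ Finset.univ.image f, g i := by
        refine (Finset.sum_subset (Finset.subset_univ _) ?_).symm
        intro x _ hx
        refine h x fun j hj => hx ?_
        simp only [Finset.mem_image, Finset.mem_univ, true_and]
        exact ⟨j, hj⟩
    _ = ∑ j, g (f j) :=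
        Finset.sum_image (fun x _ y _ hxy => hf hxy)

lemma quad_merge {p : ℕ} (A B : Matrix (Fin (p+1)) (Fin (p+1)) ℝ) (v : Fin (2*p+1) → ℝ) :
    v ⬝ᵥ (merge A B).mulVec v
      = (fun i : Fin (p+1) => v (Fin.castLE (by omega) i)) ⬝ᵥ
          A.mulVec (fun i : Fin (p+1) => v (Fin.castLE (by omega) i))
      + (fun i : Fin (p+1) => v ⟨(i:ℕ)+p, by omega⟩) ⬝ᵥ
          B.mulVec (fun i : Fin (p+1) => v ⟨(i:ℕ)+p, by omega⟩) := by
  classical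
  have hpl : p + 1 ≤ 2*p+1 := by omega
  set fL : Fin (p+1) → Fin (2*p+1) := fun i => Fin.castLE hpl i with hfL
  set fR : Fin (p+1) → Fin (2*p+1) := fun i => ⟨(i:ℕ)+p, by omega⟩ with hfR
  have hfLi : Function.Injective fL := fun a b hab => by
    simpa [fL, Fin.ext_iff] using hab
  have hfRi : Function.Injective fR := fun a b hab => by
    simp only [fR, Fin.ext_iff] at hab ⊢; omega
  have key : ∀ (X Y : Fin (2*p+1) → Fin (2*p+1) → ℝ),
      (∑ i, v i * ∑ j, (X i j + Y i j) * v j)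
        = (∑ i, ∑ j, v i * (X i j * v j)) + ∑ i, ∑ j, v i * (Y i j * v j) := by
    intro X Y
    rw [← Finset.sum_add_distrib]
    refine Finset.sum_congr rfl fun i _ => ?_
    rw [← Finset.sum_add_distrib, Finset.mul_sum]
    refine Finset.sum_congr rfl fun j _ => by ring
  simp only [dotProduct, mulVec, merge, of_apply]
  rw [key]
  congr 1
  · -- left block
    refine (sum_restrict fL hfLi _ ?_).trans ?_
    · intro ii hii
      have hle : ¬ (ii : ℕ) ≤ p := fun hle =>
        hii ⟨ii, by omega⟩ (by simp [fL, Fin.ext_iff])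
      refine Finset.sum_eq_zero fun j _ => ?_
      rw [dif_neg (by tauto)]
      ring
    · refine Finset.sum_congr rfl fun i' _ => ?_
      rw [Finset.mul_sum]
      refine (sum_restrict fL hfLi _ ?_).trans ?_
      · intro jj hjj
        have hle : ¬ (jj : ℕ) ≤ p := fun hle =>
          hjj ⟨jj, by omega⟩ (by simp [fL, Fin.ext_iff])
        rw [dif_neg (by tauto)]
        ring
      · refine Finset.sum_congr rfl fun j' _ => ?_
        have hc : ((fL i' : ℕ) ≤ p ∧ (fL j' : ℕ) ≤ p) := by
          constructor <;> simp [fL, Fin.is_le]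
        rw [dif_pos hc]
        simp only [fL, Fin.castLE, Fin.eta]
  · -- right block
    refine (sum_restrict fR hfRi _ ?_).trans ?_
    · intro ii hii
      have hle : ¬ p ≤ (ii : ℕ) := fun hle =>
        hii ⟨(ii:ℕ) - p, by have := ii.isLt; omega⟩ (by simp only [fR, Fin.ext_iff]; omega)
      refine Finset.sum_eq_zero fun j _ => ?_
      rw [dif_neg (by tauto)]
      ring
    · refine Finset.sum_congr rfl fun i' _ => ?_
      rw [Finset.mul_sum]
      refine (sum_restrict fR hfRi _ ?_).trans ?_
      · intro jj hjj
        have hle : ¬ p ≤ (jj : ℕ) := fun hle =>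
          hjj ⟨(jj:ℕ) - p, by have := jj.isLt; omega⟩ (by simp only [fR, Fin.ext_iff]; omega)
        rw [dif_neg (by tauto)]
        ring
      · refine Finset.sum_congr rfl fun j' _ => ?_
        have hc : (p ≤ (fR i' : ℕ) ∧ p ≤ (fR j' : ℕ)) := by
          constructor <;> simp [fR]
        rw [dif_pos hc]
        have e1 : ((fR i' : ℕ) - p) = (i' : ℕ) := by simp [fR]
        have e2 : ((fR j' : ℕ) - p) = (j' : ℕ) := by simp [fR]
        simp only [e1, e2, Fin.eta]
        rfl

lemma dot_Bmat {n : ℕ} (hn : 0 < n) (v w : Fin (n+1) → ℝ) :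
    v ⬝ᵥ (Bmat n).mulVec w = v (Fin.last n) * w (Fin.last n) - v 0 * w 0 := by
  have hne : Fin.last n ≠ (0 : Fin (n+1)) := by
    intro h; have := congrArg Fin.val h
    simp only [Fin.val_last, Fin.val_zero] at this; omega
  simp only [dotProduct, mulVec, Bmat, of_apply]
  have step1 : ∀ i : Fin (n+1),
      (∑ j, (if i = j ∧ i = Fin.last n then (1:ℝ) else if i = j ∧ i = 0 then -1 else 0) * w j)
        = (if i = Fin.last n then (1:ℝ) else if i = 0 then -1 else 0) * w i := by
    intro i
    rw [Finset.sum_eq_single i]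
    · by_cases h1 : i = Fin.last n <;> by_cases h2 : i = 0 <;> simp [h1, h2]
    · intro j _ hj
      have : ¬ (i = j) := fun h => hj h.symm
      simp [this]
    · simp
  simp only [step1]
  have step2 : ∀ i : Fin (n+1),
      v i * ((if i = Fin.last n then (1:ℝ) else if i = 0 then -1 else 0) * w i)
        = (if i = Fin.last n then v i * w i else 0) + (if i = 0 then -(v i * w i) else 0) := by
    intro i
    have hn0 : n ≠ 0 := by omega
    by_cases h1 : i = Fin.last n <;> by_cases h2 : i = 0 <;>
      first
        | (exfalso; apply hne; rw [h1] at h2 ⊢; exact h2)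
        | (simp [h1, h2, hn0]; try ring)
  simp only [step2]
  rw [Finset.sum_add_distrib, Finset.sum_ite_eq' Finset.univ (Fin.last n),
    Finset.sum_ite_eq' Finset.univ (0 : Fin (n+1))]
  simp; ring

lemma dot_symm {n : ℕ} (M : Matrix (Fin n) (Fin n) ℝ) (hM : Mᵀ = M)
    (v w : Fin n → ℝ) : v ⬝ᵥ M.mulVec w = w ⬝ᵥ M.mulVec v := by
  rw [dotProduct_mulVec, ← mulVec_transpose, hM, dotProduct_comm]

lemma dot_transpose_self {n : ℕ} (M : Matrix (Fin n) (Fin n) ℝ) (v : Fin n → ℝ) :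
    v ⬝ᵥ Mᵀ.mulVec v = v ⬝ᵥ M.mulVec v := by
  rw [mulVec_transpose, dotProduct_comm, ← dotProduct_mulVec]

lemma hasDerivAt_quad {n : ℕ} (M : Matrix (Fin n) (Fin n) ℝ) (U : ℝ → Fin n → ℝ)
    (t : ℝ) (U' : Fin n → ℝ) (hU : HasDerivAt U U' t) :
    HasDerivAt (fun s => U s ⬝ᵥ M.mulVec (U s))
      (U' ⬝ᵥ M.mulVec (U t) + U t ⬝ᵥ M.mulVec U') t := by
  have hcoord : ∀ i, HasDerivAt (fun s => U s i) (U' i) t := hasDerivAt_pi.mp hU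
  have main : HasDerivAt (fun s => ∑ i, ∑ j, U s i * (M i j * U s j))
      (∑ i, ∑ j, (U' i * (M i j * U t j) + U t i * (M i j * U' j))) t := by
    refine HasDerivAt.fun_sum fun i _ => HasDerivAt.fun_sum fun j _ => ?_
    exact (hcoord i).mul ((hcoord j).const_mul (M i j))
  convert main using 2 with s
  · simp only [dotProduct, mulVec, Finset.mul_sum]
  · simp only [dotProduct, mulVec, Finset.mul_sum, ← Finset.sum_add_distrib]

/-- **Proposition 4.** Multi-element energy estimate for the merged
advection–diffusion scheme: with `P = Pᴸ ⊕ₘ Pᴿ`, `Q = Qᴸ ⊕ₘ Qᴿ`, `K = Kᴸ ⊕ₘ Kᴿ`,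
`N = 2p`, `Dₓ = P⁻¹Q`, if `P U′ + a Q U = E B⁽ᴺ⁾ Dₓ U − K U + SAT` with
`SAT = −e₀ (a U₀ − ε₀ (Dₓ U)₀) + e_N (−ε_N (Dₓ U)_N)`, then for all `t ≥ 0`,
`U(t)ᵀ P U(t) + 2 ∫₀ᵗ U(s)ᵀ K U(s) ds ≤ U(0)ᵀ P U(0)`. -/
theorem stmt10 (p : ℕ) (hp : 1 ≤ p) (a : ℝ) (ha : 0 ≤ a)
    (dL dR : Fin (p+1) → ℝ) (hdL : ∀ i, 0 < dL i) (hdR : ∀ i, 0 < dR i)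
    (PL PR QL QR KL KR : Matrix (Fin (p+1)) (Fin (p+1)) ℝ)
    (hPL : PL = Matrix.diagonal dL) (hPR : PR = Matrix.diagonal dR)
    (hQL : QL + QLᵀ = Bmat p) (hQR : QR + QRᵀ = Bmat p)
    (hKL : ∀ v : Fin (p+1) → ℝ, 0 ≤ v ⬝ᵥ KL.mulVec v)
    (hKR : ∀ v : Fin (p+1) → ℝ, 0 ≤ v ⬝ᵥ KR.mulVec v)
    (P Q K : Matrix (Fin (2*p+1)) (Fin (2*p+1)) ℝ)
    (hP : P = merge PL PR) (hQ : Q = merge QL QR) (hK : K = merge KL KR)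
    (ε : Fin (2*p+1) → ℝ) (hε : ∀ i, 0 ≤ ε i)
    (E Dx : Matrix (Fin (2*p+1)) (Fin (2*p+1)) ℝ)
    (hE : E = Matrix.diagonal ε) (hDx : Dx = P⁻¹ * Q)
    (U : ℝ → Fin (2*p+1) → ℝ) (hU : ContDiff ℝ 1 U)
    (hode : ∀ t : ℝ, 0 ≤ t →
      P.mulVec (deriv U t) + a • Q.mulVec (U t)
        = (E * Bmat (2*p) * Dx).mulVec (U t) - K.mulVec (U t)
          + ((-(a * U t 0 - ε 0 * Dx.mulVec (U t) 0)) • (Pi.single 0 1 : Fin (2*p+1) → ℝ)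
             + (-(ε (Fin.last (2*p)) * Dx.mulVec (U t) (Fin.last (2*p))))
                • (Pi.single (Fin.last (2*p)) 1 : Fin (2*p+1) → ℝ))) :
    ∀ t : ℝ, 0 ≤ t →
      U t ⬝ᵥ P.mulVec (U t) + 2 * ∫ s in (0:ℝ)..t, U s ⬝ᵥ K.mulVec (U s)
        ≤ U 0 ⬝ᵥ P.mulVec (U 0) := by
  intro t ht
  have hp2 : 0 < 2*p := by omega
  have hPsym : Pᵀ = P := by
    rw [hP, merge_transpose, hPL, hPR, diagonal_transpose, diagonal_transpose]
  have hQB : Q + Qᵀ = Bmat (2*p) := by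
    rw [hQ, merge_transpose, merge_add, hQL, hQR, merge_Bmat hp]
  have hKpos : ∀ v : Fin (2*p+1) → ℝ, 0 ≤ v ⬝ᵥ K.mulVec v := by
    intro v; rw [hK, quad_merge]; exact add_nonneg (hKL _) (hKR _)
  have hUc : Continuous U := hU.continuous
  have hψ : Continuous fun s => U s ⬝ᵥ K.mulVec (U s) := by
    simp only [dotProduct, mulVec]
    exact continuous_finset_sum _ fun i _ =>
      ((continuous_apply i).comp hUc).mul
        (continuous_finset_sum _ fun j _ =>
          continuous_const.mul ((continuous_apply j).comp hUc))
  have hUd : ∀ s : ℝ, HasDerivAt U (deriv U s) s := fun s =>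
    ((hU.differentiable one_ne_zero) s).hasDerivAt
  set F : ℝ → ℝ := fun r =>
    U r ⬝ᵥ P.mulVec (U r) + 2 * ∫ s in (0:ℝ)..r, U s ⬝ᵥ K.mulVec (U s) with hF
  have hFder : ∀ s : ℝ, HasDerivAt F
      ((deriv U s ⬝ᵥ P.mulVec (U s) + U s ⬝ᵥ P.mulVec (deriv U s))
        + 2 * (U s ⬝ᵥ K.mulVec (U s))) s := by
    intro s
    have h1 := hasDerivAt_quad P U s (deriv U s) (hUd s)
    have h2 : HasDerivAt (fun r => ∫ x in (0:ℝ)..r, U x ⬝ᵥ K.mulVec (U x))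
        (U s ⬝ᵥ K.mulVec (U s)) s :=
      intervalIntegral.integral_hasDerivAt_right
        (hψ.intervalIntegrable _ _)
        (hψ.stronglyMeasurableAtFilter _ _)
        hψ.continuousAt
    exact h1.add (h2.const_mul 2)
  have hkey : ∀ s : ℝ, 0 ≤ s →
      (deriv U s ⬝ᵥ P.mulVec (U s) + U s ⬝ᵥ P.mulVec (deriv U s))
        + 2 * (U s ⬝ᵥ K.mulVec (U s)) ≤ 0 := by
    intro s hs
    have hsym : deriv U s ⬝ᵥ P.mulVec (U s) = U s ⬝ᵥ P.mulVec (deriv U s) :=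
      dot_symm P hPsym _ _
    have hPU' : U s ⬝ᵥ P.mulVec (deriv U s)
        = (U s ⬝ᵥ (E * Bmat (2*p) * Dx).mulVec (U s)) - (U s ⬝ᵥ K.mulVec (U s))
          + (U s ⬝ᵥ ((-(a * U s 0 - ε 0 * Dx.mulVec (U s) 0)) • (Pi.single 0 1 : Fin (2*p+1) → ℝ)
             + (-(ε (Fin.last (2*p)) * Dx.mulVec (U s) (Fin.last (2*p))))
                • (Pi.single (Fin.last (2*p)) 1 : Fin (2*p+1) → ℝ)))
          - a * (U s ⬝ᵥ Q.mulVec (U s)) := by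
      rw [eq_sub_of_add_eq (hode s hs), dotProduct_sub, dotProduct_add, dotProduct_sub,
        dotProduct_smul, smul_eq_mul]
    have hEB : U s ⬝ᵥ (E * Bmat (2*p) * Dx).mulVec (U s)
        = (U s (Fin.last (2*p)) * ε (Fin.last (2*p))) * Dx.mulVec (U s) (Fin.last (2*p))
          - (U s 0 * ε 0) * Dx.mulVec (U s) 0 := by
      rw [← Matrix.mulVec_mulVec, ← Matrix.mulVec_mulVec, hE, dotProduct_mulVec]
      have hv : (U s) ᵥ* Matrix.diagonal ε = fun i => U s i * ε i :=
        funext fun i => Matrix.vecMul_diagonal _ _ _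
      rw [hv, dot_Bmat hp2]
    have hSAT : U s ⬝ᵥ ((-(a * U s 0 - ε 0 * Dx.mulVec (U s) 0)) • (Pi.single 0 1 : Fin (2*p+1) → ℝ)
             + (-(ε (Fin.last (2*p)) * Dx.mulVec (U s) (Fin.last (2*p))))
                • (Pi.single (Fin.last (2*p)) 1 : Fin (2*p+1) → ℝ))
        = (-(a * U s 0 - ε 0 * Dx.mulVec (U s) 0)) * U s 0
          + (-(ε (Fin.last (2*p)) * Dx.mulVec (U s) (Fin.last (2*p)))) * U s (Fin.last (2*p)) := by
      rw [dotProduct_add, dotProduct_smul, dotProduct_smul, dotProduct_single, dotProduct_single,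
        smul_eq_mul, smul_eq_mul]
      ring
    have hQQ : 2 * (U s ⬝ᵥ Q.mulVec (U s))
        = U s (Fin.last (2*p)) * U s (Fin.last (2*p)) - U s 0 * U s 0 := by
      have hb := dot_Bmat hp2 (U s) (U s)
      rw [← hQB, add_mulVec, dotProduct_add, dot_transpose_self] at hb
      linarith
    have ha0 : 0 ≤ a * (U s 0 * U s 0) := mul_nonneg ha (mul_self_nonneg _)
    have haN : 0 ≤ a * (U s (Fin.last (2*p)) * U s (Fin.last (2*p))) :=
      mul_nonneg ha (mul_self_nonneg _)
    rw [hsym, hPU', hEB, hSAT]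
    nlinarith [hQQ]
  have hmono : AntitoneOn F (Set.Ici (0:ℝ)) := by
    refine antitoneOn_of_deriv_nonpos (convex_Ici 0) ?_ ?_ ?_
    · exact (Differentiable.continuous fun s => (hFder s).differentiableAt).continuousOn
    · intro x _
      exact (hFder x).differentiableAt.differentiableWithinAt
    · intro x hx
      rw [(hFder x).deriv]
      have hx' : (0:ℝ) ≤ x := le_of_lt (by simpa [interior_Ici] using hx)
      exact hkey x hx'
  have hle : F t ≤ F 0 := hmono Set.self_mem_Ici (Set.mem_Ici.mpr ht) ht
  have hF0 : F 0 = U 0 ⬝ᵥ P.mulVec (U 0) := by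
    simp [hF, intervalIntegral.integral_same]
  rw [hF0] at hle
  exact hle
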